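/- arXiv:math/0307143 — 3 statements merged into one kernel-verified Lean document; each statement's English description precedes it below -/
import Mathlib

section
/- Let C be a Brown category. Then the composite of any two phantom maps is zero: if u : X → Y and v : Y → Z are morphisms in C with h_u = 0 and h_v = 0, then v ∘ u = 0. -/
/-!
Formalization of statements from N. P. Strickland,
"Axiomatic stable homotopy --- a survey" (arXiv:math/0307143).
-/

open CategoryTheory CategoryTheory.Limits CategoryTheory.Pretriangulated

universe w v u

namespace AxStable

variable {C : Type u} [Category.{v} C]

section Compact

variable [Preadditive C]

/-- The canonical map `⊕ᵢ Hom(A, Xᵢ) →+ Hom(A, ∐ᵢ Xᵢ)`. -/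
noncomputable def coprodComparison {ι : Type w} (A : C) (X : ι → C) [HasCoproduct X] :
    DirectSum ι (fun i => A ⟶ X i) →+ (A ⟶ ∐ X) :=
  letI := Classical.decEq ι
  DirectSum.toAddMonoid fun i =>
    AddMonoidHom.mk' (fun g => g ≫ Sigma.ι X i) (fun _ _ => Preadditive.add_comp _ _ _ _ _ _)

variable [HasCoproducts.{v} C]

/-- An object `A` is compact (small) if the canonical map `⊕ᵢ Hom(A, Xᵢ) → Hom(A, ∐ᵢ Xᵢ)`
is bijective for every set-indexed family `X`. -/
def IsCompactObj (A : C) : Prop :=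
  ∀ (ι : Type v) (X : ι → C), Function.Bijective (coprodComparison A X)

variable (C) in
/-- The full subcategory `F` of compact objects of `C`. -/
abbrev Cpt := ObjectProperty.FullSubcategory (fun A : C => IsCompactObj A)

variable (C) in
/-- The inclusion `F ⥤ C` of the compact objects. -/
abbrev cptInclusion : Cpt C ⥤ C := ObjectProperty.ι _

/-- The restricted Yoneda functor `h` on objects: `h_X = Hom_C(-, X)` restricted to the
compact objects, an object of the category `A` of additive functors `Fᵒᵖ ⥤ Ab`. -/
noncomputable def hFunctor (X : C) : (Cpt C)ᵒᵖ ⥤ AddCommGrpCat.{v} :=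
  (cptInclusion C).op ⋙ preadditiveYoneda.obj X

/-- The restricted Yoneda functor `h` on morphisms. -/
noncomputable def hMap {X Y : C} (u : X ⟶ Y) : hFunctor X ⟶ hFunctor Y :=
  CategoryTheory.Functor.whiskerLeft _ (preadditiveYoneda.map u)

variable (C) in
/-- Fullness of the restricted Yoneda functor `h : C → A`: every natural transformation
`h_X ⟶ h_Y` is of the form `h_u` for a morphism `u : X ⟶ Y`. -/
def HIsFull : Prop :=
  ∀ (X Y : C) (φ : hFunctor X ⟶ hFunctor Y), ∃ u : X ⟶ Y, hMap u = φ

end Compact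

section Triangulated

variable [Preadditive C] [HasZeroObject C] [HasShift C ℤ]
  [∀ n : ℤ, (shiftFunctor C n).Additive] [Pretriangulated C] [HasCoproducts.{v} C]

variable (C) in
/-- `C` is compactly generated if there is a set `G` of compact objects such that any object
`X` with `Hom(Σⁿ A, X) = 0` for all `A ∈ G` and `n : ℤ` is a zero object. -/
def CompactlyGenerated : Prop :=
  ∃ G : Set C, (∀ A ∈ G, IsCompactObj A) ∧
    ∀ X : C, (∀ A ∈ G, ∀ n : ℤ, ∀ f : (shiftFunctor C n).obj A ⟶ X, f = 0) → IsZero X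

/-- A functor `H : Fᵒᵖ ⥤ Ab` is cohomological if it is additive and sends every distinguished
triangle `X ⟶ Y ⟶ Z ⟶ ΣX` with compact vertices to an exact sequence `H(Z) → H(Y) → H(X)`. -/
def IsCohomological (H : (Cpt C)ᵒᵖ ⥤ AddCommGrpCat.{v}) : Prop :=
  H.Additive ∧
  ∀ (T : Triangle C) (_ : T ∈ (distTriang C)) (h1 : IsCompactObj T.obj₁)
    (h2 : IsCompactObj T.obj₂) (h3 : IsCompactObj T.obj₃),
    Function.Exact
      (H.map (Quiver.Hom.op (show (⟨T.obj₂, h2⟩ : Cpt C) ⟶ ⟨T.obj₃, h3⟩ from ObjectProperty.homMk T.mor₂)))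
      (H.map (Quiver.Hom.op (show (⟨T.obj₁, h1⟩ : Cpt C) ⟶ ⟨T.obj₂, h2⟩ from ObjectProperty.homMk T.mor₁)))

end Triangulated

section Brown

variable [Preadditive C] [HasZeroObject C] [HasShift C ℤ]
  [∀ n : ℤ, (shiftFunctor C n).Additive] [Pretriangulated C] [HasCoproducts.{v} C]

variable (C) in
/-- A Brown category: a compactly generated triangulated category in which the restricted
Yoneda functor `h` is full and the functors isomorphic to some `h_X` are exactly the
cohomological ones. -/
def IsBrownCategory : Prop :=
  CompactlyGenerated C ∧ HIsFull C ∧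
    ∀ H : (Cpt C)ᵒᵖ ⥤ AddCommGrpCat.{v},
      ((∃ X : C, Nonempty (hFunctor X ≅ H)) ↔ IsCohomological H)

end Brown

variable [Preadditive C] [HasZeroObject C] [HasShift C ℤ]
  [∀ n : ℤ, (shiftFunctor C n).Additive] [Pretriangulated C] [IsTriangulated C]
  [HasCoproducts.{v} C]

section Auxiliary

lemma hMap_app_eq {X Y : C} (u : X ⟶ Y) (A : Cpt C) (a : A.obj ⟶ X) :
    ((hMap u).app (Opposite.op A)) a = a ≫ u := rfl

/-- Pointwise consequence of being a phantom map. -/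
lemma phantom_comp {X Y : C} {u : X ⟶ Y} (hu : hMap u = 0) {A : C}
    (hA : IsCompactObj A) (a : A ⟶ X) : a ≫ u = 0 := by
  have h := congrArg
    (fun (φ : hFunctor X ⟶ hFunctor Y) => φ.app (Opposite.op ⟨A, hA⟩) a) hu
  exact h

/-- A shift of a compact object is compact. -/
lemma isCompactObj_shift {A : C} (hA : IsCompactObj A) (n : ℤ) :
    IsCompactObj ((shiftFunctor C n).obj A) := by
  intro ι X
  letI : DecidableEq ι := Classical.decEq ι
  set G := shiftFunctor C (-n) with hG
  set adj := (shiftEquiv C n).toAdjunction with hadj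
  -- additive hom-equivalences coming from the shift adjunction
  have hadd : ∀ (T : C) (f g : (shiftFunctor C n).obj A ⟶ T),
      adj.homEquiv A T (f + g) = adj.homEquiv A T f + adj.homEquiv A T g := by
    intro T f g
    erw [Adjunction.homEquiv_unit, Adjunction.homEquiv_unit, Adjunction.homEquiv_unit]
    show adj.unit.app A ≫ G.map (f + g) = adj.unit.app A ≫ G.map f + adj.unit.app A ≫ G.map g
    exact (congrArg (adj.unit.app A ≫ ·) (G.map_add (f := f) (g := g))).trans
      (Preadditive.comp_add _ _ _ _ _ _)
  let e : ∀ T : C, ((shiftFunctor C n).obj A ⟶ T) ≃+ (A ⟶ G.obj T) :=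
    fun T => AddEquiv.mk' (adj.homEquiv A T) (hadd T)
  let m : DirectSum ι (fun i => (shiftFunctor C n).obj A ⟶ X i) ≃+
      DirectSum ι (fun i => A ⟶ G.obj (X i)) :=
    DFinsupp.mapRange.addEquiv (fun i => e (X i))
  set σ := sigmaComparison G X with hσ
  have key : ∀ d, (e (∐ X)) (coprodComparison ((shiftFunctor C n).obj A) X d) =
      (coprodComparison A (fun i => G.obj (X i))) (m d) ≫ σ := by
    intro d
    have : ((e (∐ X)).toAddMonoidHom.comp
          (coprodComparison ((shiftFunctor C n).obj A) X)) d =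
        ((AddMonoidHom.mk' (fun (t : A ⟶ ∐ fun i => G.obj (X i)) => t ≫ σ)
            (fun f g => Preadditive.add_comp _ _ _ _ _ _)).comp
          ((coprodComparison A (fun i => G.obj (X i))).comp
            m.toAddMonoidHom)) d := by
      refine DFunLike.congr_fun ?_ d
      refine DirectSum.addHom_ext (fun i g => ?_)
      simp only [AddMonoidHom.comp_apply, AddEquiv.coe_toAddMonoidHom]
      have hm : m (DirectSum.of _ i g) = DirectSum.of _ i (e (X i) g) := by
        exact DFinsupp.mapRange_single (hf := fun i => map_zero (e (X i)))
      rw [hm]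
      show (e (∐ X)) ((coprodComparison _ X) (DirectSum.of _ i g)) =
        ((coprodComparison A fun i => G.obj (X i)) (DirectSum.of _ i (e (X i) g))) ≫ σ
      rw [coprodComparison, coprodComparison]
      rw [DirectSum.toAddMonoid_of, DirectSum.toAddMonoid_of]
      simp only [AddMonoidHom.mk'_apply]
      show adj.homEquiv A (∐ X) (g ≫ Sigma.ι X i) =
        (adj.homEquiv A (X i) g ≫ Sigma.ι (fun i => G.obj (X i)) i) ≫ σ
      rw [hσ]
      erw [Adjunction.homEquiv_unit, Adjunction.homEquiv_unit]
      show adj.unit.app A ≫ G.map (g ≫ Sigma.ι X i) =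
        ((adj.unit.app A ≫ G.map g) ≫ Sigma.ι (fun i => G.obj (X i)) i) ≫ sigmaComparison G X
      rw [Category.assoc, ι_comp_sigmaComparison]
      exact (congrArg (adj.unit.app A ≫ ·) (G.map_comp g (Sigma.ι X i))).trans
        (Category.assoc _ _ _).symm
    simpa using this
  have hfun : ⇑(coprodComparison ((shiftFunctor C n).obj A) X) =
      ((e (∐ X)).symm : (A ⟶ G.obj (∐ X)) → _) ∘
        (fun t => t ≫ σ) ∘ (⇑(coprodComparison A (fun i => G.obj (X i)))) ∘ ⇑m := by
    funext d
    simp only [Function.comp_apply]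
    rw [← key d, AddEquiv.symm_apply_apply]
  rw [hfun]
  have hσiso : IsIso σ := by
    rw [hσ]; infer_instance
  refine Function.Bijective.comp (e (∐ X)).symm.bijective
    (Function.Bijective.comp ?_ (Function.Bijective.comp (hA ι _) m.bijective))
  exact ⟨fun f g h => by simpa using congrArg (fun t => t ≫ inv σ) h,
    fun f => ⟨f ≫ inv σ, by simp⟩⟩

/-- A phantom map composed (after shifting) with a morphism from a shifted compact
object vanishes. -/
lemma phantom_comp_shift {X Y : C} {u : X ⟶ Y} (hu : hMap u = 0) {A : C}
    (hA : IsCompactObj A) (w : A ⟶ X⟦(1 : ℤ)⟧) :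
    w ≫ u⟦(1 : ℤ)⟧' = 0 := by
  have hA' : IsCompactObj ((shiftFunctor C (-1 : ℤ)).obj A) := isCompactObj_shift hA _
  set ι1 := shiftFunctorCompIsoId C (1 : ℤ) (-1 : ℤ) (by ring) with hι1
  have hb := phantom_comp hu hA' ((shiftFunctor C (-1 : ℤ)).map w ≫ ι1.hom.app X)
  have hnat := ι1.hom.naturality u
  dsimp at hnat
  -- hnat : (u⟦1⟧')⟦-1⟧' ≫ ι1.hom.app Y = ι1.hom.app X ≫ u
  rw [Category.assoc, ← hnat, ← Category.assoc, ← Functor.map_comp] at hb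
  have h2 : (shiftFunctor C (-1 : ℤ)).map (w ≫ u⟦(1 : ℤ)⟧') = 0 := by
    apply (cancel_mono (ι1.hom.app Y)).1
    rw [zero_comp]
    exact hb
  apply (shiftFunctor C (-1 : ℤ)).map_injective
  rw [h2, Functor.map_zero]

/-- If `θ` acts as the identity on all maps from compact objects, so does its shift. -/
lemma comp_shift_eq_self {Z : C} {θ : Z ⟶ Z}
    (hpt : ∀ (B : C), IsCompactObj B → ∀ b : B ⟶ Z, b ≫ θ = b)
    {A : C} (hA : IsCompactObj A) (w : A ⟶ Z⟦(1 : ℤ)⟧) :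
    w ≫ θ⟦(1 : ℤ)⟧' = w := by
  have hA' : IsCompactObj ((shiftFunctor C (-1 : ℤ)).obj A) := isCompactObj_shift hA _
  set ι1 := shiftFunctorCompIsoId C (1 : ℤ) (-1 : ℤ) (by ring) with hι1
  have hb := hpt _ hA' ((shiftFunctor C (-1 : ℤ)).map w ≫ ι1.hom.app Z)
  have hnat := ι1.hom.naturality θ
  dsimp at hnat
  rw [Category.assoc, ← hnat, ← Category.assoc, ← Functor.map_comp] at hb
  apply (shiftFunctor C (-1 : ℤ)).map_injective
  have : IsIso (ι1.hom.app Z) := inferInstance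
  apply (cancel_mono (ι1.hom.app Z)).1
  exact hb

/-- Conservativity-type lemma: an endomorphism acting as the identity on all maps
from compact objects is a monomorphism, provided `C` is compactly generated. -/
lemma mono_of_pointwise_id (hCG : CompactlyGenerated C) {Z : C} (θ : Z ⟶ Z)
    (hpt : ∀ (B : C), IsCompactObj B → ∀ b : B ⟶ Z, b ≫ θ = b) :
    Mono θ := by
  obtain ⟨G, hGc, hGgen⟩ := hCG
  obtain ⟨R, x, y, hT⟩ := distinguished_cocone_triangle θ
  have hR : IsZero R := by
    apply hGgen
    intro A hA n f
    have hA' : IsCompactObj ((shiftFunctor C n).obj A) := isCompactObj_shift (hGc A hA) n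
    have h1 : f ≫ y = 0 := by
      have hy : y ≫ θ⟦(1 : ℤ)⟧' = 0 := comp_distTriang_mor_zero₃₁ _ hT
      calc f ≫ y = (f ≫ y) ≫ θ⟦(1 : ℤ)⟧' := (comp_shift_eq_self hpt hA' (f ≫ y)).symm
        _ = f ≫ (y ≫ θ⟦(1 : ℤ)⟧') := by rw [Category.assoc]
        _ = 0 := by rw [hy, comp_zero]
    obtain ⟨g, hg⟩ := Pretriangulated.Triangle.coyoneda_exact₃ _ hT f h1
    have hgθ : g ≫ θ = g := hpt _ hA' g
    have hx : θ ≫ x = 0 := comp_distTriang_mor_zero₁₂ _ hT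
    rw [hg, ← hgθ]
    refine (Category.assoc g θ x).trans ?_
    change g ≫ θ ≫ x = 0
    erw [hx, comp_zero]
  have hy0 : y = 0 := hR.eq_of_src y 0
  exact Pretriangulated.Triangle.mono₁ _ hT hy0

end Auxiliary

/-- in a Brown category, the composite of two phantom maps is zero. -/
theorem phantom_comp_phantom_eq_zero (hBrown : IsBrownCategory C) {X Y Z : C}
    (u : X ⟶ Y) (v : Y ⟶ Z) (hu : hMap u = 0) (hv : hMap v = 0) :
    u ≫ v = 0 := by
  obtain ⟨hCG, hFull, -⟩ := hBrown
  obtain ⟨Q', k', l', hT₂⟩ := Pretriangulated.distinguished_cocone_triangle v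
  obtain ⟨Q, k, l, hT₁⟩ := Pretriangulated.distinguished_cocone_triangle (u ≫ v)
  obtain ⟨ψ, hψ₁, hψ₂⟩ := Pretriangulated.complete_distinguished_triangle_morphism
    (Pretriangulated.Triangle.mk (u ≫ v) k l) (Pretriangulated.Triangle.mk v k' l')
    hT₁ hT₂ u (𝟙 Z) (Category.comp_id _)
  replace hψ₁ : k ≫ ψ = k' := hψ₁.trans (Category.id_comp _)
  replace hψ₂ : l ≫ u⟦(1 : ℤ)⟧' = ψ ≫ l' := hψ₂
  -- hψ₁ : k ≫ ψ = k';  hψ₂ : l ≫ u⟦1⟧' = ψ ≫ l'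
  have uniq : ∀ (B : C), IsCompactObj B → ∀ b b' : B ⟶ Z, b ≫ k' = b' ≫ k' → b = b' := by
    intro B hB b b' h
    have hsub : (b - b') ≫ k' = 0 := by rw [Preadditive.sub_comp, h, sub_self]
    obtain ⟨g, hg⟩ := Pretriangulated.Triangle.coyoneda_exact₂ _ hT₂ (b - b') hsub
    have hgv : g ≫ v = 0 := phantom_comp hv hB g
    change b - b' = g ≫ v at hg
    rw [hgv] at hg
    exact sub_eq_zero.1 hg
  have exist : ∀ (B : C), IsCompactObj B → ∀ a : B ⟶ Q, ∃ b : B ⟶ Z, b ≫ k' = a ≫ ψ := by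
    intro B hB a
    have hz : (a ≫ ψ) ≫ l' = 0 := by
      erw [Category.assoc, ← hψ₂, ← Category.assoc]
      exact phantom_comp_shift hu hB (a ≫ l)
    obtain ⟨b, hb⟩ := Pretriangulated.Triangle.coyoneda_exact₃ _ hT₂ (a ≫ ψ) hz
    exact ⟨b, hb.symm⟩
  -- the natural retraction `ρ : h_Q ⟶ h_Z` of `h_k`
  let fb : ∀ (B : C), IsCompactObj B → (B ⟶ Q) → (B ⟶ Z) :=
    fun B hB a => Classical.choose (exist B hB a)
  have fb_spec : ∀ (B : C) (hB : IsCompactObj B) (a : B ⟶ Q),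
      fb B hB a ≫ k' = a ≫ ψ := fun B hB a => Classical.choose_spec (exist B hB a)
  let ρ : hFunctor Q ⟶ hFunctor Z :=
    { app := fun A => AddCommGrpCat.ofHom
        (AddMonoidHom.mk' (fun a => fb A.unop.obj A.unop.property a) (by
          intro a₁ a₂
          have hAc : IsCompactObj A.unop.obj := A.unop.property
          refine uniq _ hAc _ _ ?_
          show fb A.unop.obj A.unop.property (a₁ + a₂) ≫ k' =
            (fb A.unop.obj A.unop.property a₁ + fb A.unop.obj A.unop.property a₂) ≫ k'
          erw [fb_spec A.unop.obj A.unop.property (a₁ + a₂), Preadditive.add_comp,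
            Preadditive.add_comp, fb_spec A.unop.obj A.unop.property a₁,
            fb_spec A.unop.obj A.unop.property a₂]
          rfl))
      naturality := by
        intro A A' g
        ext a
        have hAc : IsCompactObj A'.unop.obj := A'.unop.property
        refine uniq _ hAc _ _ ?_
        set φ : A'.unop.obj ⟶ A.unop.obj := (cptInclusion C).map g.unop with hφ
        show fb A'.unop.obj A'.unop.property (φ ≫ a) ≫ k' =
          (φ ≫ fb A.unop.obj A.unop.property a) ≫ k'
        erw [fb_spec A'.unop.obj A'.unop.property, Category.assoc, Category.assoc,
          fb_spec A.unop.obj A.unop.property a]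
        rfl }
  obtain ⟨r, hr⟩ := hFull Q Z ρ
  have hrapp : ∀ (B : C) (hB : IsCompactObj B) (a : B ⟶ Q),
      a ≫ r = fb B hB a := by
    intro B hB a
    have h := congrArg
      (fun (φ : hFunctor Q ⟶ hFunctor Z) => φ.app (Opposite.op ⟨B, hB⟩) a) hr
    exact h
  have hpt : ∀ (B : C), IsCompactObj B → ∀ b : B ⟶ Z, b ≫ (k ≫ r) = b := by
    intro B hB b
    rw [← Category.assoc, hrapp B hB (b ≫ k)]
    refine uniq _ hB _ _ ?_
    erw [fb_spec B hB (b ≫ k), Category.assoc, hψ₁]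
    rfl
  have hmono : Mono (k ≫ r) := mono_of_pointwise_id hCG _ hpt
  have h0 : (u ≫ v) ≫ (k ≫ r) = 0 := by
    have hk : (u ≫ v) ≫ k = 0 := comp_distTriang_mor_zero₁₂ _ hT₁
    rw [← Category.assoc, hk, zero_comp]
  have := (cancel_mono (k ≫ r)).1 (by rw [h0, zero_comp] : (u ≫ v) ≫ (k ≫ r) = 0 ≫ (k ≫ r))
  exact this

end AxStable
end

section
/- Let C be a triangulated category with set-indexed coproducts equipped with a symmetric monoidal structure with unit S and product ∧ (smash), such that for every object X the functor X ∧ − commutes with the shift Σ, sends distinguished triangles to distinguished triangles, and preserves set-indexed coproducts; assume that S is compact and that the only localizing subcategory of C containing S is C itself. Then every localizing subcategory D of C is an ideal: if X ∈ D and Y is any object of C, then Y ∧ X ∈ D. -/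
/-!
Formalization of statements from N. P. Strickland,
"Axiomatic stable homotopy --- a survey" (arXiv:math/0307143).
-/

open CategoryTheory CategoryTheory.Limits CategoryTheory.Pretriangulated

universe w v u

namespace AxStable

variable {C : Type u} [Category.{v} C]

section Localizing

variable [Preadditive C] [HasZeroObject C] [HasShift C ℤ]
  [∀ n : ℤ, (shiftFunctor C n).Additive] [Pretriangulated C] [HasCoproducts.{v} C]

variable (C) in
/-- A localizing subcategory of `C`, identified with its set of objects: a full triangulated
subcategory closed under isomorphisms, retracts and set-indexed coproducts. -/
structure IsLocalizing (P : Set C) : Prop where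
  zero_mem : ∀ X : C, IsZero X → X ∈ P
  mem_of_iso : ∀ {X Y : C}, (X ≅ Y) → X ∈ P → Y ∈ P
  shift_mem : ∀ (n : ℤ) {X : C}, X ∈ P → (shiftFunctor C n).obj X ∈ P
  ext₃ : ∀ (T : Triangle C), T ∈ (distTriang C) → T.obj₁ ∈ P → T.obj₂ ∈ P → T.obj₃ ∈ P
  retract_mem : ∀ {X Y : C}, (∃ (s : Y ⟶ X) (r : X ⟶ Y), s ≫ r = 𝟙 Y) → X ∈ P → Y ∈ P
  coprod_mem : ∀ {ι : Type v} (X : ι → C), (∀ i, X i ∈ P) → (∐ X) ∈ P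

end Localizing

open MonoidalCategory

variable [Preadditive C] [HasZeroObject C] [HasShift C ℤ]
  [∀ n : ℤ, (shiftFunctor C n).Additive] [Pretriangulated C] [IsTriangulated C]
  [HasCoproducts.{v} C] [MonoidalCategory C] [SymmetricCategory C]
  [∀ X : C, (MonoidalCategory.tensorLeft X).CommShift ℤ]
  [∀ X : C, (MonoidalCategory.tensorLeft X).IsTriangulated]

/-- if the unit `S` is compact and generates `C`, then every localizing
subcategory of `C` is an ideal. -/
theorem localizing_isIdeal
    (hpres : ∀ (X : C) (ι : Type v),
      PreservesColimitsOfShape (Discrete ι) (MonoidalCategory.tensorLeft X))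
    (hS : IsCompactObj (𝟙_ C))
    (hgen : ∀ P : Set C, IsLocalizing C P → (𝟙_ C) ∈ P → P = Set.univ) :
    ∀ D : Set C, IsLocalizing C D → ∀ X ∈ D, ∀ Y : C, (Y ⊗ X) ∈ D := by
  intro D hD X hX Y
  have key : ∀ Z : C, (X ⊗ Z) ∈ D → (Z ⊗ X) ∈ D := fun Z h => hD.mem_of_iso (β_ X Z) h
  have key' : ∀ Z : C, (Z ⊗ X) ∈ D → (X ⊗ Z) ∈ D := fun Z h => hD.mem_of_iso (β_ Z X) h
  have hSP : (𝟙_ C ⊗ X) ∈ D := hD.mem_of_iso (λ_ X).symm hX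
  have hloc : IsLocalizing C {Z : C | (Z ⊗ X) ∈ D} := by
    constructor
    · -- zero_mem
      intro Z hZ
      have hdist := Functor.IsTriangulated.map_distinguished (F := tensorLeft X)
        (contractibleTriangle (𝟙_ C)) (contractible_distinguished (𝟙_ C))
      have h0 : (X ⊗ (contractibleTriangle (𝟙_ C)).obj₃) ∈ D :=
        hD.ext₃ _ hdist (key' _ hSP) (key' _ hSP)
      exact key Z (hD.mem_of_iso ((tensorLeft X).mapIso ((isZero_zero C).iso hZ)) h0)
    · -- mem_of_iso
      intro Z Z' e hZ
      exact hD.mem_of_iso (whiskerRightIso e X) hZ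
    · -- shift_mem
      intro n Z hZ
      have h1 : ((X ⊗ Z)⟦n⟧) ∈ D := hD.shift_mem n (key' _ hZ)
      have h2 : (X ⊗ (Z⟦n⟧)) ∈ D :=
        hD.mem_of_iso (((tensorLeft X).commShiftIso n).app Z).symm h1
      exact key _ h2
    · -- ext₃
      intro T hT h1 h2
      have hdist := Functor.IsTriangulated.map_distinguished (F := tensorLeft X) T hT
      exact key _ (hD.ext₃ _ hdist (key' _ h1) (key' _ h2))
    · -- retract_mem
      rintro Z Z' ⟨s, r, hsr⟩ hZ
      refine hD.retract_mem ⟨s ▷ X, r ▷ X, ?_⟩ hZ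
      rw [← comp_whiskerRight, hsr, id_whiskerRight]
    · -- coprod_mem
      intro ι Zs h
      letI := hpres X ι
      have h1 : (∐ fun i => X ⊗ Zs i) ∈ D := hD.coprod_mem _ (fun i => key' _ (h i))
      have h2 : (X ⊗ ∐ Zs) ∈ D :=
        hD.mem_of_iso (asIso (sigmaComparison (tensorLeft X) Zs)) h1
      exact key _ h2
  have := hgen _ hloc hSP
  have hY : Y ∈ {Z : C | (Z ⊗ X) ∈ D} := this ▸ Set.mem_univ Y
  exact hY


end AxStable
end

section
/- Let C be a triangulated category equipped with a symmetric monoidal structure with unit S and product ∧ (smash), such that for every object X the functor X ∧ − commutes with the shift and sends distinguished triangles to distinguished triangles. If i : I → S and j : J → S are ideals, then the composite I ∧ J → S ∧ S ≅ S of i ∧ j with the unitor isomorphism is again an ideal. -/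
/-!
Formalization of statements from N. P. Strickland,
"Axiomatic stable homotopy --- a survey" (arXiv:math/0307143).
-/

open CategoryTheory CategoryTheory.Limits CategoryTheory.Pretriangulated

universe w v u

namespace AxStable

variable {C : Type u} [Category.{v} C]

section SmashIdeal

open MonoidalCategory

variable [Preadditive C] [HasZeroObject C] [HasShift C ℤ]
  [∀ n : ℤ, (shiftFunctor C n).Additive] [Pretriangulated C] [MonoidalCategory C]

/-- A morphism `i : I ⟶ S` is an ideal if for every distinguished triangle
`I ⟶ S ⟶ S/I ⟶ ΣI` extending `i`, the composite `I ∧ S/I ⟶ S ∧ S/I ≅ S/I` is zero. -/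
def IsSmashIdeal {I : C} (i : I ⟶ 𝟙_ C) : Prop :=
  ∀ (Q : C) (q : 𝟙_ C ⟶ Q) (δ : Q ⟶ (I⟦(1:ℤ)⟧ : C)),
    Triangle.mk i q δ ∈ (distTriang C) → (i ▷ Q) ≫ (λ_ Q).hom = 0

end SmashIdeal

open MonoidalCategory

variable [Preadditive C] [HasZeroObject C] [HasShift C ℤ]
  [∀ n : ℤ, (shiftFunctor C n).Additive] [Pretriangulated C] [IsTriangulated C]
  [MonoidalCategory C] [SymmetricCategory C]
  [∀ X : C, (MonoidalCategory.tensorLeft X).CommShift ℤ]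
  [∀ X : C, (MonoidalCategory.tensorLeft X).IsTriangulated]

/-- Naturality of the right action map `X ⊗ J ⟶ X` induced by `j : J ⟶ 𝟙`. -/
lemma act_natural {J' X Y : C} (j : J' ⟶ 𝟙_ C) (w : X ⟶ Y) :
    (w ▷ J') ≫ ((Y ◁ j) ≫ (ρ_ Y).hom) = ((X ◁ j) ≫ (ρ_ X).hom) ≫ w := by
  rw [← Category.assoc, ← whisker_exchange, Category.assoc,
    MonoidalCategory.rightUnitor_naturality, Category.assoc]

/-- If the left action of `i` on `X` vanishes, so does the right action. -/
lemma act_zero_of_whisker_zero {I' X : C} (i : I' ⟶ 𝟙_ C)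
    (h : (i ▷ X) ≫ (λ_ X).hom = 0) : (X ◁ i) ≫ (ρ_ X).hom = 0 := by
  rw [← braiding_leftUnitor, ← Category.assoc,
    BraidedCategory.braiding_naturality_right, Category.assoc, h, comp_zero]

/-- If the action of `j` on `B` vanishes, so does its action on `X ⊗ B`. -/
lemma act_tensor_zero {X B J' : C} (j : J' ⟶ 𝟙_ C)
    (h : (B ◁ j) ≫ (ρ_ B).hom = 0) :
    ((X ⊗ B) ◁ j) ≫ (ρ_ (X ⊗ B)).hom = 0 := by
  rw [MonoidalCategory.rightUnitor_tensor_hom, ← Category.assoc,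
    MonoidalCategory.associator_naturality_right, Category.assoc,
    ← MonoidalCategory.whiskerLeft_comp, h]
  have : X ◁ (0 : B ⊗ J' ⟶ B) = 0 := by
    change (tensorLeft X).map (0 : B ⊗ J' ⟶ B) = 0
    exact Functor.map_zero _ _ _
  rw [this, comp_zero]

/-- the smash product of two ideals `i : I ⟶ S` and `j : J ⟶ S`, namely the
composite `I ∧ J ⟶ S ∧ S ≅ S`, is again an ideal. -/
theorem isSmashIdeal_smash {I J : C} (i : I ⟶ 𝟙_ C) (j : J ⟶ 𝟙_ C)
    (hi : IsSmashIdeal i) (hj : IsSmashIdeal j) :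
    IsSmashIdeal ((i ⊗ₘ j) ≫ (λ_ (𝟙_ C)).hom) := by
  intro Q q δ hT
  set k : I ⊗ J ⟶ 𝟙_ C := (i ⊗ₘ j) ≫ (λ_ (𝟙_ C)).hom with hk
  -- choose cones for i and j
  obtain ⟨A, p, d, hA⟩ := Pretriangulated.distinguished_cocone_triangle i
  obtain ⟨B, pB, dB, hB⟩ := Pretriangulated.distinguished_cocone_triangle j
  have hiA : (A ◁ i) ≫ (ρ_ A).hom = 0 :=
    act_zero_of_whisker_zero i (hi A p d hA)
  have hjB : (B ◁ j) ≫ (ρ_ B).hom = 0 :=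
    act_zero_of_whisker_zero j (hj B pB dB hB)
  -- k factors as f ≫ i with f = (I ◁ j) ≫ ρ
  have hkfi : ((I ◁ j) ≫ (ρ_ I).hom) ≫ i = k := by
    rw [hk, MonoidalCategory.tensorHom_def', unitors_equal, Category.assoc,
      Category.assoc, MonoidalCategory.rightUnitor_naturality]
  -- the cone of f is I ⊗ B
  have hT12 : Triangle.mk ((I ◁ j) ≫ (ρ_ I).hom) ((ρ_ I).inv ≫ (I ◁ pB))
      ((I ◁ dB) ≫ ((tensorLeft I).commShiftIso (1 : ℤ)).hom.app J) ∈ distTriang C := by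
    refine isomorphic_distinguished _ ((tensorLeft I).map_distinguished _ hB) _ ?_
    refine Triangle.isoMk _ _ (Iso.refl _) (ρ_ I).symm (Iso.refl _) ?_ ?_ ?_
    · dsimp [Functor.mapTriangle, Triangle.mk]; simp
    · dsimp [Functor.mapTriangle, Triangle.mk]; simp
    · dsimp [Functor.mapTriangle, Triangle.mk]; simp
  -- octahedron: distinguished triangle I ⊗ B ⟶ Q ⟶ A
  let O := Triangulated.someOctahedron hkfi hT12 hA hT
  -- the action of i on Q factors through I ⊗ B
  have h1 : ((Q ◁ i) ≫ (ρ_ Q).hom) ≫ O.m₃ = 0 := by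
    rw [Category.assoc, ← Category.assoc, ← act_natural i O.m₃, hiA, comp_zero]
  obtain ⟨w, hw⟩ : ∃ w : Q ⊗ I ⟶ I ⊗ B, (Q ◁ i) ≫ (ρ_ Q).hom = w ≫ O.m₁ := Triangle.coyoneda_exact₂ _ O.mem ((Q ◁ i) ≫ (ρ_ Q).hom) h1
  -- the action of j kills the image of O.m₁
  have h2 : (O.m₁ ▷ J) ≫ ((Q ◁ j) ≫ (ρ_ Q).hom) = 0 := by
    rw [act_natural j O.m₁, act_tensor_zero j hjB, zero_comp]
  -- rewrite the goal via the braiding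
  have conv : (k ▷ Q) ≫ (λ_ Q).hom =
      (β_ (I ⊗ J) Q).hom ≫ (Q ◁ k) ≫ (ρ_ Q).hom := by
    rw [← braiding_rightUnitor, ← Category.assoc,
      BraidedCategory.braiding_naturality_left, Category.assoc]
  -- decompose the action of k on Q
  have key : (Q ◁ k) ≫ (ρ_ Q).hom =
      (α_ Q I J).inv ≫ (((Q ◁ i) ≫ (ρ_ Q).hom) ▷ J) ≫ ((Q ◁ j) ≫ (ρ_ Q).hom) := by
    rw [← hkfi]
    simp only [MonoidalCategory.whiskerLeft_comp, MonoidalCategory.comp_whiskerRight,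
      Category.assoc]
    rw [← whisker_exchange_assoc, ← whisker_exchange_assoc,
      MonoidalCategory.rightUnitor_naturality (ρ_ Q).hom,
      MonoidalCategory.rightUnitor_naturality_assoc (Q ◁ i),
      MonoidalCategory.rightUnitor_tensor_hom]
    simp only [Category.assoc]
    rw [MonoidalCategory.associator_naturality_right_assoc, Iso.inv_hom_id_assoc]
  rw [conv, key, hw]
  simp only [MonoidalCategory.comp_whiskerRight, Category.assoc, h2, comp_zero]

end AxStable
end
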